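/- For a, b ≥ 0, the Marcum Q-function satisfies Q₁(a,b) ≤ (I₀(ab)/exp(ab)) · { exp(−(b−a)²/2) + a√(π/2)·erfc((b−a)/√2) }. -/

import Mathlib

open MeasureTheory ProbabilityTheory Filter

noncomputable instance (M : ℕ) : MeasureSpace (EuclideanSpace ℂ (Fin M)) :=
  { volume := Measure.map (WithLp.toLp 2) (volume : Measure (Fin M → ℂ)) }
instance (M : ℕ) : BorelSpace (EuclideanSpace ℂ (Fin M)) :=
  inferInstance
instance (M : ℕ) : PolishSpace (EuclideanSpace ℂ (Fin M)) :=
  inferInstance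

/-- The circularly-symmetric complex Gaussian distribution `CN(μ, v)` on `ℂ`,
given by the density `z ↦ (π v)⁻¹ exp(-|z-μ|²/v)` w.r.t. Lebesgue measure. -/
noncomputable def cn (μ : ℂ) (v : ℝ) : Measure ℂ :=
  volume.withDensity fun z =>
    ENNReal.ofReal ((Real.pi * v)⁻¹ * Real.exp (-(‖z - μ‖) ^ 2 / v))

/-- The circularly-symmetric complex Gaussian distribution `CN(μ, v • I_M)` on `ℂ^M`. -/
noncomputable def cnVec (M : ℕ) (μ : EuclideanSpace ℂ (Fin M)) (v : ℝ) :
    Measure (EuclideanSpace ℂ (Fin M)) :=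
  volume.withDensity fun x =>
    ENNReal.ofReal (((Real.pi * v) ^ M)⁻¹ * Real.exp (-‖x - μ‖ ^ 2 / v))

/-- The modified Bessel function of the first kind of order zero,
`I₀(x) = ∑ (x/2)^(2n) / (n!)²`. -/
noncomputable def besselI0 (x : ℝ) : ℝ :=
  ∑' n : ℕ, (x / 2) ^ (2 * n) / ((Nat.factorial n : ℝ)) ^ 2

noncomputable def besselI1 (x : ℝ) : ℝ :=
  ∑' n : ℕ, (n : ℝ) * (x / 2) ^ (2 * n - 1) / ((Nat.factorial n : ℝ)) ^ 2

lemma factorial_ge_one (n : ℕ) : (1 : ℝ) ≤ (Nat.factorial n : ℝ) := by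
  exact_mod_cast Nat.one_le_iff_ne_zero.2 (Nat.factorial_ne_zero n)

lemma I0_term_nonneg (x : ℝ) (n : ℕ) :
    0 ≤ (x / 2) ^ (2 * n) / ((Nat.factorial n : ℝ)) ^ 2 := by
  apply div_nonneg _ (by positivity)
  rw [pow_mul]
  positivity

lemma summable_besselI0 (x : ℝ) :
    Summable (fun n : ℕ => (x / 2) ^ (2 * n) / ((Nat.factorial n : ℝ)) ^ 2) := by
  have hle : ∀ n : ℕ, (x / 2) ^ (2 * n) / ((Nat.factorial n : ℝ)) ^ 2
      ≤ ((x / 2) ^ 2) ^ n / (Nat.factorial n : ℝ) := by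
    intro n
    rw [pow_mul]
    apply div_le_div_of_nonneg_left (by positivity) (by positivity)
    rw [sq]
    exact le_mul_of_one_le_right (by positivity) (factorial_ge_one n)
  exact Summable.of_nonneg_of_le (I0_term_nonneg x) hle
    (Real.summable_pow_div_factorial ((x / 2) ^ 2))

lemma besselI0_nonneg (x : ℝ) : 0 ≤ besselI0 x :=
  tsum_nonneg (I0_term_nonneg x)

lemma summable_I1_aux {c : ℝ} (hc : 1 ≤ c) :
    Summable (fun n : ℕ => (n : ℝ) * c ^ (2 * n - 1) / ((Nat.factorial n : ℝ)) ^ 2) := by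
  have hc0 : (0:ℝ) ≤ c := le_trans zero_le_one hc
  have hle : ∀ n : ℕ, (n : ℝ) * c ^ (2 * n - 1) / ((Nat.factorial n : ℝ)) ^ 2
      ≤ (2 * c ^ 2) ^ n / (Nat.factorial n : ℝ) := by
    intro n
    have h1 : (n : ℝ) * c ^ (2 * n - 1) ≤ 2 ^ n * c ^ (2 * n) := by
      apply mul_le_mul _ (pow_le_pow_right₀ hc (Nat.sub_le _ _)) (by positivity) (by positivity)
      exact_mod_cast (Nat.lt_two_pow_self (n := n)).le
    have h2 : (Nat.factorial n : ℝ) ≤ ((Nat.factorial n : ℝ)) ^ 2 := by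
      rw [sq]; exact le_mul_of_one_le_right (by positivity) (factorial_ge_one n)
    calc (n : ℝ) * c ^ (2 * n - 1) / ((Nat.factorial n : ℝ)) ^ 2
        ≤ 2 ^ n * c ^ (2 * n) / (Nat.factorial n : ℝ) :=
          div_le_div₀ (by positivity) h1 (by positivity) h2
      _ = (2 * c ^ 2) ^ n / (Nat.factorial n : ℝ) := by rw [mul_pow, pow_mul]
  exact Summable.of_nonneg_of_le (fun n => by positivity) hle
    (Real.summable_pow_div_factorial _)

lemma I1_term_norm_le {c y : ℝ} (hy : |y| / 2 ≤ c) (n : ℕ) :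
    ‖(n : ℝ) * (y / 2) ^ (2 * n - 1) / ((Nat.factorial n : ℝ)) ^ 2‖
      ≤ (n : ℝ) * c ^ (2 * n - 1) / ((Nat.factorial n : ℝ)) ^ 2 := by
  have hc0 : (0:ℝ) ≤ c := le_trans (by positivity) hy
  rw [Real.norm_eq_abs, abs_div, abs_mul, abs_pow]
  rw [abs_of_nonneg (by positivity : (0:ℝ) ≤ ((Nat.factorial n : ℝ)) ^ 2),
    Nat.abs_cast, abs_div]
  apply div_le_div_of_nonneg_right _ (by positivity)
  apply mul_le_mul_of_nonneg_left _ (by positivity)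
  calc (|y| / |(2:ℝ)|) ^ (2 * n - 1) = (|y| / 2) ^ (2 * n - 1) := by norm_num
    _ ≤ c ^ (2 * n - 1) := pow_le_pow_left₀ (by positivity) hy _

lemma summable_besselI1 (x : ℝ) :
    Summable (fun n : ℕ => (n : ℝ) * (x / 2) ^ (2 * n - 1) / ((Nat.factorial n : ℝ)) ^ 2) := by
  have hc : (1:ℝ) ≤ |x| / 2 + 1 := by linarith [abs_nonneg x]
  exact Summable.of_norm_bounded (summable_I1_aux hc)
    (fun n => I1_term_norm_le (by linarith [abs_nonneg x]) n)

lemma hasDerivAt_I0_term (n : ℕ) (x : ℝ) :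
    HasDerivAt (fun y : ℝ => (y / 2) ^ (2 * n) / ((Nat.factorial n : ℝ)) ^ 2)
      ((n : ℝ) * (x / 2) ^ (2 * n - 1) / ((Nat.factorial n : ℝ)) ^ 2) x := by
  have h : HasDerivAt (fun y : ℝ => y / 2) (1 / 2) x := (hasDerivAt_id x).div_const 2
  have h2 := (h.pow (2 * n)).div_const ((Nat.factorial n : ℝ) ^ 2)
  refine h2.congr_deriv ?_
  push_cast
  ring

lemma hasDerivAt_besselI0 (x : ℝ) : HasDerivAt besselI0 (besselI1 x) x := by
  set c : ℝ := |x| / 2 + 1 with hcdef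
  have hc : (1:ℝ) ≤ c := by rw [hcdef]; linarith [abs_nonneg x]
  have hx : x ∈ Metric.ball (0:ℝ) (|x| + 2) := by
    simp [Real.dist_eq]
  exact hasDerivAt_tsum_of_isPreconnected (summable_I1_aux hc) Metric.isOpen_ball
    ((convex_ball (0:ℝ) _).isPreconnected)
    (fun n y _ => hasDerivAt_I0_term n y)
    (fun n y hy => by
      have : |y| / 2 ≤ c := by
        have := mem_ball_iff_norm.mp hy
        simp only [sub_zero, Real.norm_eq_abs] at this
        rw [hcdef]; linarith
      exact I1_term_norm_le this n)
    hx (summable_besselI0 x) hx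

lemma besselI1_le_besselI0 {x : ℝ} (hx : 0 ≤ x) : besselI1 x ≤ besselI0 x := by
  set a : ℕ → ℝ := fun n => (x / 2) ^ (2 * n) / ((Nat.factorial n : ℝ)) ^ 2 with ha
  set t : ℕ → ℝ := fun n => (n : ℝ) * (x / 2) ^ (2 * n - 1) / ((Nat.factorial n : ℝ)) ^ 2 with ht
  have hsum_t : Summable t := summable_besselI1 x
  have hsum_a : Summable a := summable_besselI0 x
  have hsum_a' : Summable (fun n => a (n + 1)) := (summable_nat_add_iff 1).2 hsum_a
  have hsum_t' : Summable (fun n => t (n + 1)) := (summable_nat_add_iff 1).2 hsum_t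
  have ha0 : a 0 = 1 := by simp [ha]
  have ht0 : t 0 = 0 := by simp [ht]
  have hI1 : besselI1 x = ∑' n, t (n + 1) := by
    rw [besselI1, ← ht, Summable.tsum_eq_zero_add hsum_t, ht0, zero_add]
  have hI0 : besselI0 x = 1 + ∑' n, a (n + 1) := by
    rw [besselI0, ← ha, Summable.tsum_eq_zero_add hsum_a, ha0]
  have hterm : ∀ n : ℕ, t (n + 1) ≤ (a n + a (n + 1)) / 2 := by
    intro n
    set p : ℝ := (x / 2) ^ n / (Nat.factorial n : ℝ) with hp
    set q : ℝ := (x / 2) ^ (n + 1) / (Nat.factorial (n + 1) : ℝ) with hq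
    have hpq : 2 * p * q ≤ p ^ 2 + q ^ 2 := two_mul_le_add_sq p q
    have hp2 : p ^ 2 = a n := by
      rw [hp, ha, div_pow, ← pow_mul, mul_comm n 2]
    have hq2 : q ^ 2 = a (n + 1) := by
      rw [hq, ha, div_pow, ← pow_mul, mul_comm (n + 1) 2]
    have htval : t (n + 1) = p * q := by
      have h1 : 2 * (n + 1) - 1 = 2 * n + 1 := by omega
      simp only [ht, hp, hq]
      rw [h1, Nat.factorial_succ]
      have hfne : (Nat.factorial n : ℝ) ≠ 0 := by positivity
      have hne : ((n : ℝ) + 1) ≠ 0 := by positivity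
      push_cast
      rw [pow_add, pow_succ]
      field_simp
      ring
    rw [htval, ← hp2, ← hq2]
    linarith
  have h1 : besselI1 x ≤ (∑' n, a n + ∑' n, a (n + 1)) / 2 := by
    rw [hI1]
    calc ∑' n, t (n + 1) ≤ ∑' n, (a n + a (n + 1)) / 2 :=
          Summable.tsum_le_tsum hterm hsum_t' ((hsum_a.add hsum_a').div_const 2)
      _ = (∑' n, a n + ∑' n, a (n + 1)) / 2 := by
          rw [tsum_div_const, Summable.tsum_add hsum_a hsum_a']
  have h2 : ∑' n, a (n + 1) = besselI0 x - 1 := by rw [hI0]; ring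
  have h3 : (∑' n, a n : ℝ) = besselI0 x := by rw [besselI0, ← ha]
  rw [h3, h2] at h1
  linarith

lemma hasDerivAt_I0exp (t : ℝ) :
    HasDerivAt (fun s => besselI0 s * Real.exp (-s))
      ((besselI1 t - besselI0 t) * Real.exp (-t)) t := by
  have h2 : HasDerivAt (fun s : ℝ => Real.exp (-s)) (-Real.exp (-t)) t := by
    exact ((Real.hasDerivAt_exp (-t)).comp t (hasDerivAt_neg t)).congr_deriv (by ring)
  have := (hasDerivAt_besselI0 t).mul h2
  refine this.congr_deriv ?_
  ring

lemma antitoneOn_I0exp : AntitoneOn (fun t => besselI0 t * Real.exp (-t)) (Set.Ici 0) := by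
  have hdiff : Differentiable ℝ (fun t => besselI0 t * Real.exp (-t)) :=
    fun t => (hasDerivAt_I0exp t).differentiableAt
  apply antitoneOn_of_deriv_nonpos (convex_Ici 0) hdiff.continuous.continuousOn
    (fun t _ => (hdiff t).differentiableWithinAt)
  intro t ht
  rw [interior_Ici] at ht
  rw [(hasDerivAt_I0exp t).deriv]
  apply mul_nonpos_of_nonpos_of_nonneg
  · exact sub_nonpos.2 (besselI1_le_besselI0 (le_of_lt ht))
  · exact (Real.exp_pos _).le

lemma setIntegral_Ioi_comp_sub (f : ℝ → ℝ) (b a : ℝ) :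
    ∫ x in Set.Ioi b, f (x - a) = ∫ y in Set.Ioi (b - a), f y := by
  rw [← integral_indicator measurableSet_Ioi, ← integral_indicator measurableSet_Ioi,
    ← integral_sub_right_eq_self (Set.indicator (Set.Ioi (b - a)) f) a]
  congr 1
  ext x
  rw [Set.indicator_apply, Set.indicator_apply]
  have : x - a ∈ Set.Ioi (b - a) ↔ x ∈ Set.Ioi b := by
    simp [Set.mem_Ioi]
  simp [this]

lemma integrableOn_sub_mul_exp (a b : ℝ) :
    IntegrableOn (fun x => (x - a) * Real.exp (-(x - a) ^ 2 / 2)) (Set.Ioi b) := by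
  have h := (integrable_mul_exp_neg_mul_sq (by norm_num : (0:ℝ) < 1/2)).comp_sub_right a
  have h2 : (fun x => (x - a) * Real.exp (-(1/2) * (x - a) ^ 2))
      = fun x => (x - a) * Real.exp (-(x - a) ^ 2 / 2) := by
    funext x; ring_nf
  rw [h2] at h
  exact h.integrableOn

lemma integrableOn_exp_sub_sq (a b : ℝ) :
    IntegrableOn (fun x => Real.exp (-(x - a) ^ 2 / 2)) (Set.Ioi b) := by
  have h := (integrable_exp_neg_mul_sq (by norm_num : (0:ℝ) < 1/2)).comp_sub_right a
  have h2 : (fun x => Real.exp (-(1/2) * (x - a) ^ 2))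
      = fun x => Real.exp (-(x - a) ^ 2 / 2) := by
    funext x; ring_nf
  rw [h2] at h
  exact h.integrableOn

lemma integral_sub_mul_exp (a b : ℝ) :
    ∫ x in Set.Ioi b, (x - a) * Real.exp (-(x - a) ^ 2 / 2)
      = Real.exp (-(b - a) ^ 2 / 2) := by
  have hderiv : ∀ x ∈ Set.Ici b, HasDerivAt (fun y => -Real.exp (-(y - a) ^ 2 / 2))
      ((x - a) * Real.exp (-(x - a) ^ 2 / 2)) x := by
    intro x _
    have hu : HasDerivAt (fun y : ℝ => -(y - a) ^ 2 / 2) (-(x - a)) x := by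
      have h1 : HasDerivAt (fun y : ℝ => y - a) 1 x := (hasDerivAt_id x).sub_const a
      have h2 := ((h1.pow 2).neg).div_const 2
      refine h2.congr_deriv ?_
      push_cast; ring
    have := ((Real.hasDerivAt_exp (-(x - a) ^ 2 / 2)).comp x hu).neg
    refine this.congr_deriv ?_
    ring
  have htend : Tendsto (fun y => -Real.exp (-(y - a) ^ 2 / 2)) atTop (nhds 0) := by
    rw [← neg_zero]
    apply Tendsto.neg
    apply Real.tendsto_exp_atBot.comp
    apply Tendsto.atBot_div_const (by norm_num : (0:ℝ) < 2)
    apply tendsto_neg_atBot_iff.2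
    exact (tendsto_pow_atTop (by norm_num : 2 ≠ 0)).comp (tendsto_atTop_add_const_right _ (-a) tendsto_id)
  have := integral_Ioi_of_hasDerivAt_of_tendsto' hderiv (integrableOn_sub_mul_exp a b) htend
  rw [this]
  ring

lemma integral_exp_sub_sq (a b : ℝ) :
    ∫ x in Set.Ioi b, Real.exp (-(x - a) ^ 2 / 2)
      = Real.sqrt 2 * ∫ t in Set.Ioi ((b - a) / Real.sqrt 2), Real.exp (-t ^ 2) := by
  have h0 : ∫ x in Set.Ioi b, Real.exp (-(x - a) ^ 2 / 2)
      = ∫ y in Set.Ioi (b - a), Real.exp (-y ^ 2 / 2) :=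
    setIntegral_Ioi_comp_sub (fun y => Real.exp (-y ^ 2 / 2)) b a
  rw [h0]
  have hs2 : (0:ℝ) < Real.sqrt 2 := Real.sqrt_pos.2 (by norm_num)
  have h1 := integral_comp_mul_left_Ioi (fun t => Real.exp (-t ^ 2)) (b - a)
    (inv_pos.2 hs2)
  have h2 : ∀ y : ℝ, Real.exp (-((Real.sqrt 2)⁻¹ * y) ^ 2) = Real.exp (-y ^ 2 / 2) := by
    intro y
    congr 1
    rw [mul_pow, inv_pow, Real.sq_sqrt (by norm_num : (0:ℝ) ≤ 2)]
    ring
  simp only [h2] at h1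
  rw [h1, inv_inv, smul_eq_mul]
  congr 2
  rw [inv_mul_eq_div]

/-- The first-order Marcum Q-function,
`Q₁(a,b) = ∫_b^∞ x exp(−(x²+a²)/2) I₀(ax) dx`. -/
noncomputable def marcumQ1 (a b : ℝ) : ℝ :=
  ∫ x in Set.Ioi b, x * Real.exp (-(x ^ 2 + a ^ 2) / 2) * besselI0 (a * x)

/-- The complementary error function `erfc(x) = (2/√π) ∫_x^∞ exp(−t²) dt`. -/
noncomputable def erfc (x : ℝ) : ℝ :=
  (2 / Real.sqrt Real.pi) * ∫ t in Set.Ioi x, Real.exp (-t ^ 2)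

/-- tighter upper bound on the Marcum Q-function. For `a, b ≥ 0`,
`Q₁(a,b) ≤ (I₀(ab)/exp(ab)) { exp(−(b−a)²/2) + a√(π/2) erfc((b−a)/√2) }`. -/
theorem marcumQ1_le_besselI0_bound (a b : ℝ) (ha : 0 ≤ a) (hb : 0 ≤ b) :
    marcumQ1 a b
      ≤ (besselI0 (a * b) / Real.exp (a * b))
          * (Real.exp (-(b - a) ^ 2 / 2)
            + a * Real.sqrt (Real.pi / 2) * erfc ((b - a) / Real.sqrt 2)) := by

  set C := besselI0 (a * b) * Real.exp (-(a * b)) with hC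
  have hgint : IntegrableOn (fun x => C * (x * Real.exp (-(x - a) ^ 2 / 2))) (Set.Ioi b) := by
    have h1 := (integrableOn_sub_mul_exp a b).add ((integrableOn_exp_sub_sq a b).const_mul a)
    have h2 : (fun x => (x - a) * Real.exp (-(x - a) ^ 2 / 2) + a * Real.exp (-(x - a) ^ 2 / 2))
        = fun x => x * Real.exp (-(x - a) ^ 2 / 2) := by funext x; ring
    exact ((h1.congr (Filter.EventuallyEq.of_eq h2)).const_mul C : )
  have hdiffI0 : Differentiable ℝ besselI0 := fun t => (hasDerivAt_besselI0 t).differentiableAt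
  have hI0cont : Continuous besselI0 := hdiffI0.continuous
  have hpt : ∀ x ∈ Set.Ioi b, x * Real.exp (-(x ^ 2 + a ^ 2) / 2) * besselI0 (a * x)
      ≤ C * (x * Real.exp (-(x - a) ^ 2 / 2)) := by
    intro x hx
    have hxb : b < x := hx
    have hx0 : 0 ≤ x := le_trans hb hxb.le
    have hsplit : Real.exp (-(x ^ 2 + a ^ 2) / 2)
        = Real.exp (-(x - a) ^ 2 / 2) * Real.exp (-(a * x)) := by
      rw [← Real.exp_add]; congr 1; ring
    have hmono : besselI0 (a * x) * Real.exp (-(a * x)) ≤ C := by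
      rw [hC]
      exact antitoneOn_I0exp (Set.mem_Ici.2 (mul_nonneg ha hb))
        (Set.mem_Ici.2 (mul_nonneg ha hx0))
        (mul_le_mul_of_nonneg_left hxb.le ha)
    calc x * Real.exp (-(x ^ 2 + a ^ 2) / 2) * besselI0 (a * x)
        = (x * Real.exp (-(x - a) ^ 2 / 2)) * (besselI0 (a * x) * Real.exp (-(a * x))) := by
          rw [hsplit]; ring
      _ ≤ (x * Real.exp (-(x - a) ^ 2 / 2)) * C :=
          mul_le_mul_of_nonneg_left hmono (by positivity)
      _ = C * (x * Real.exp (-(x - a) ^ 2 / 2)) := by ring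
  have hfmeas : AEStronglyMeasurable
      (fun x => x * Real.exp (-(x ^ 2 + a ^ 2) / 2) * besselI0 (a * x))
      (volume.restrict (Set.Ioi b)) := by
    apply Continuous.aestronglyMeasurable
    exact ((continuous_id.mul (Real.continuous_exp.comp (by fun_prop))).mul
      (hI0cont.comp (by fun_prop)))
  have hfint : IntegrableOn
      (fun x => x * Real.exp (-(x ^ 2 + a ^ 2) / 2) * besselI0 (a * x)) (Set.Ioi b) := by
    apply hgint.integrable.mono hfmeas
    rw [ae_restrict_iff' measurableSet_Ioi]
    apply ae_of_all
    intro x hx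
    have h1 := hpt x hx
    have hx0 : 0 ≤ x := le_trans hb (le_of_lt hx)
    have hf0 : 0 ≤ x * Real.exp (-(x ^ 2 + a ^ 2) / 2) * besselI0 (a * x) :=
      mul_nonneg (mul_nonneg hx0 (Real.exp_pos _).le) (besselI0_nonneg _)
    rw [Real.norm_eq_abs, Real.norm_eq_abs, abs_of_nonneg hf0,
      abs_of_nonneg (le_trans hf0 h1)]
    exact h1
  have hmain : marcumQ1 a b ≤ ∫ x in Set.Ioi b, C * (x * Real.exp (-(x - a) ^ 2 / 2)) := by
    rw [marcumQ1]
    exact setIntegral_mono_on hfint hgint measurableSet_Ioi hpt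
  have hJ : ∫ x in Set.Ioi b, C * (x * Real.exp (-(x - a) ^ 2 / 2))
      = C * (Real.exp (-(b - a) ^ 2 / 2)
          + a * (Real.sqrt 2 * ∫ t in Set.Ioi ((b - a) / Real.sqrt 2), Real.exp (-t ^ 2))) := by
    rw [integral_const_mul]
    congr 1
    have h2 : (fun x : ℝ => x * Real.exp (-(x - a) ^ 2 / 2))
        = fun x => (x - a) * Real.exp (-(x - a) ^ 2 / 2) + a * Real.exp (-(x - a) ^ 2 / 2) := by
      funext x; ring
    rw [h2, MeasureTheory.integral_add (integrableOn_sub_mul_exp a b)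
      ((integrableOn_exp_sub_sq a b).const_mul a),
      integral_sub_mul_exp, integral_const_mul, integral_exp_sub_sq]
  have hrw : (besselI0 (a * b) / Real.exp (a * b))
          * (Real.exp (-(b - a) ^ 2 / 2)
            + a * Real.sqrt (Real.pi / 2) * erfc ((b - a) / Real.sqrt 2))
      = C * (Real.exp (-(b - a) ^ 2 / 2)
          + a * (Real.sqrt 2 * ∫ t in Set.Ioi ((b - a) / Real.sqrt 2), Real.exp (-t ^ 2))) := by
    have hCa : besselI0 (a * b) / Real.exp (a * b) = C := by
      rw [hC, Real.exp_neg, div_eq_mul_inv]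
    have hπ : (0:ℝ) < Real.sqrt Real.pi := Real.sqrt_pos.2 Real.pi_pos
    have hs2 : (0:ℝ) < Real.sqrt 2 := Real.sqrt_pos.2 (by norm_num)
    have h22 : Real.sqrt 2 * Real.sqrt 2 = 2 := Real.mul_self_sqrt (by norm_num)
    have hkey : Real.sqrt (Real.pi / 2) * (2 / Real.sqrt Real.pi) = Real.sqrt 2 := by
      rw [Real.sqrt_div Real.pi_pos.le]
      field_simp
      nlinarith [h22, hπ.le, hs2.le]
    rw [hCa, erfc]
    congr 1
    rw [← hkey]
    ring
  rw [hrw]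
  rw [hJ] at hmain
  exact hmain
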